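/- For every positive definite quadratic form Q in 2 variables, the covering density satisfies Θ(Q) ≥ 2π/√27 = 1.2091…, i.e., the form Q_{A*_2} attains the minimal lattice covering density in dimension 2 (Kershner's theorem). -/

import Mathlib

open Matrix

noncomputable section

/-- `Q[x] = xᵀ Q x`. -/
def quadForm {d : ℕ} (Q : Matrix (Fin d) (Fin d) ℝ) (x : Fin d → ℝ) : ℝ :=
  x ⬝ᵥ (Q *ᵥ x)

/-- Coercion of an integer vector to a real vector. -/
def intCast {d : ℕ} (v : Fin d → ℤ) : Fin d → ℝ := fun i => (v i : ℝ)

/-- A positive definite quadratic form: a symmetric positive definite real matrix. -/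
def IsPQF {d : ℕ} (Q : Matrix (Fin d) (Fin d) ℝ) : Prop :=
  Q.IsSymm ∧ Q.PosDef

/-- The homogeneous minimum `λ(Q) = min {Q[v] : v ∈ ℤ^d \ {0}}`. -/
def homMin {d : ℕ} (Q : Matrix (Fin d) (Fin d) ℝ) : ℝ :=
  sInf {r | ∃ v : Fin d → ℤ, v ≠ 0 ∧ r = quadForm Q (intCast v)}

/-- The set of minimal vectors `Min(Q)`. -/
def minVecs {d : ℕ} (Q : Matrix (Fin d) (Fin d) ℝ) : Set (Fin d → ℤ) :=
  {v | v ≠ 0 ∧ quadForm Q (intCast v) = homMin Q}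

/-- The inhomogeneous minimum `μ(Q) = max_{x ∈ ℝ^d} min_{v ∈ ℤ^d} Q[x - v]`. -/
def inhomMin {d : ℕ} (Q : Matrix (Fin d) (Fin d) ℝ) : ℝ :=
  ⨆ x : Fin d → ℝ, ⨅ v : Fin d → ℤ, quadForm Q (x - intCast v)

/-- `κ_d`, the volume of the `d`-dimensional Euclidean unit ball. -/
def ballVol (d : ℕ) : ℝ :=
  (MeasureTheory.volume (Metric.ball (0 : EuclideanSpace ℝ (Fin d)) 1)).toReal

/-- The packing density `δ(Q)`. -/
def packDensity {d : ℕ} (Q : Matrix (Fin d) (Fin d) ℝ) : ℝ :=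
  Real.sqrt (homMin Q ^ d / Q.det) * ballVol d / 2 ^ d

/-- The covering density `Θ(Q)`. -/
def covDensity {d : ℕ} (Q : Matrix (Fin d) (Fin d) ℝ) : ℝ :=
  Real.sqrt (inhomMin Q ^ d / Q.det) * ballVol d

/-- The packing-covering constant `γ(Q)`. -/
def pcConst {d : ℕ} (Q : Matrix (Fin d) (Fin d) ℝ) : ℝ :=
  2 * Real.sqrt (inhomMin Q / homMin Q)

/-- `Q` is perfect: it is the unique symmetric matrix `Q'` with `Q'[v] = λ(Q)`
for all `v ∈ Min(Q)`. -/
def IsPerfectForm {d : ℕ} (Q : Matrix (Fin d) (Fin d) ℝ) : Prop :=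
  ∀ Q' : Matrix (Fin d) (Fin d) ℝ, Q'.IsSymm →
    (∀ v ∈ minVecs Q, quadForm Q' (intCast v) = homMin Q) → Q' = Q

/-- `Q` is eutactic: `Q⁻¹ = Σ_{v ∈ Min(Q)} c_v · v vᵀ` with all `c_v > 0`. -/
def IsEutacticForm {d : ℕ} (Q : Matrix (Fin d) (Fin d) ℝ) : Prop :=
  ∃ (s : Finset (Fin d → ℤ)) (c : (Fin d → ℤ) → ℝ),
    (s : Set (Fin d → ℤ)) = minVecs Q ∧ (∀ v ∈ s, 0 < c v) ∧
    Q⁻¹ = ∑ v ∈ s, c v • vecMulVec (intCast v) (intCast v)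

/-- `Q` is extreme: a local maximum of the packing density among PQFs. -/
def IsExtremeForm {d : ℕ} (Q : Matrix (Fin d) (Fin d) ℝ) : Prop :=
  ∃ ε > (0 : ℝ), ∀ Q' : Matrix (Fin d) (Fin d) ℝ, IsPQF Q' →
    (∀ i j, |Q' i j - Q i j| < ε) → packDensity Q' ≤ packDensity Q

/-- The form `Q_{A*_d}` with diagonal entries `d` and off-diagonal entries `-1`. -/
def QAstar (d : ℕ) : Matrix (Fin d) (Fin d) ℝ :=
  Matrix.of fun i j => if i = j then (d : ℝ) else -1


-- ===== auxiliary development =====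

lemma quadForm_apply (Q : Matrix (Fin 2) (Fin 2) ℝ) (y : Fin 2 → ℝ) :
    quadForm Q y = Q 0 0 * y 0 ^ 2 + (Q 0 1 + Q 1 0) * (y 0 * y 1) + Q 1 1 * y 1 ^ 2 := by
  simp [quadForm, dotProduct, Matrix.mulVec, Fin.sum_univ_two]
  ring

lemma quadForm_pos {Q : Matrix (Fin 2) (Fin 2) ℝ} (hQ : IsPQF Q) {y : Fin 2 → ℝ}
    (hy : y ≠ 0) : 0 < quadForm Q y := by
  have h := hQ.2.dotProduct_mulVec_pos hy
  unfold quadForm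
  simpa using h

lemma quadForm_nonneg {Q : Matrix (Fin 2) (Fin 2) ℝ} (hQ : IsPQF Q) (y : Fin 2 → ℝ) :
    0 ≤ quadForm Q y := by
  rcases eq_or_ne y 0 with rfl | hy
  · simp [quadForm]
  · exact (quadForm_pos hQ hy).le

lemma entry_pos {Q : Matrix (Fin 2) (Fin 2) ℝ} (hQ : IsPQF Q) :
    0 < Q 0 0 ∧ 0 < Q 1 1 := by
  constructor
  · have h := quadForm_pos hQ (y := ![1,0]) (by
      intro h; have := congrFun h 0; simp at this)
    rw [quadForm_apply] at h; norm_num at h; exact h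
  · have h := quadForm_pos hQ (y := ![0,1]) (by
      intro h; have := congrFun h 1; simp at this)
    rw [quadForm_apply] at h; norm_num at h; exact h

lemma symm_entry {Q : Matrix (Fin 2) (Fin 2) ℝ} (hQ : IsPQF Q) : Q 1 0 = Q 0 1 := by
  have := hQ.1; rw [Matrix.IsSymm] at this
  have := congrFun (congrFun this 1) 0
  simpa [Matrix.transpose_apply] using this.symm

lemma det_eq {Q : Matrix (Fin 2) (Fin 2) ℝ} (hQ : IsPQF Q) :
    Q.det = Q 0 0 * Q 1 1 - Q 0 1 ^ 2 := by
  rw [Matrix.det_fin_two, symm_entry hQ]; ring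

lemma det_pos' {Q : Matrix (Fin 2) (Fin 2) ℝ} (hQ : IsPQF Q) : 0 < Q.det :=
  hQ.2.det_pos

/-- pointwise coercivity -/
lemma quad_lower {Q : Matrix (Fin 2) (Fin 2) ℝ} (hQ : IsPQF Q) (y : Fin 2 → ℝ) :
    Q.det / (Q 0 0 + Q 1 1) * (y 0 ^ 2 + y 1 ^ 2) ≤ quadForm Q y := by
  have ha := (entry_pos hQ).1
  have hc := (entry_pos hQ).2
  have hd := det_pos' hQ
  have hde := det_eq hQ
  rw [quadForm_apply, symm_entry hQ]
  rw [div_mul_eq_mul_div, div_le_iff₀ (by linarith)]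
  nlinarith [sq_nonneg (Q 0 0 * y 0 + Q 0 1 * y 1), sq_nonneg (Q 0 1 * y 0 + Q 1 1 * y 1)]

/-- the key polynomial inequality -/
lemma keyPoly {a b c : ℝ} (hb : 0 ≤ b) (h2b : 2*b ≤ a) (hac : a ≤ c) :
    64 * (a*c - b^2)^3 ≤ 27 * (a*c*(a + c - 2*b))^2 := by
  obtain ⟨p, hp⟩ : ∃ p, b = p^2 := ⟨Real.sqrt b, (Real.sq_sqrt hb).symm⟩
  obtain ⟨q, hq⟩ : ∃ q, a = 2*b + q^2 :=
    ⟨Real.sqrt (a - 2*b), by rw [Real.sq_sqrt (by linarith)]; ring⟩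
  obtain ⟨r, hr⟩ : ∃ r, c = a + r^2 :=
    ⟨Real.sqrt (c - a), by rw [Real.sq_sqrt (by linarith)]; ring⟩
  subst hr hq hp
  have key : 27 * ((2*p^2 + q^2)*((2*p^2+q^2) + r^2)*((2*p^2+q^2) + ((2*p^2+q^2) + r^2) - 2*p^2))^2
      - 64 * ((2*p^2+q^2)*((2*p^2+q^2) + r^2) - (p^2)^2)^3 =
      27*q^4*r^8 + 98*q^6*r^6 + 159*q^8*r^4 + 132*q^10*r^2 + 44*q^12 + 108*p^2*q^2*r^8 +
      480*p^2*q^4*r^6 + 840*p^2*q^6*r^4 + 780*p^2*q^8*r^2 + 312*p^2*q^10 + 108*p^4*r^8 +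
      744*p^4*q^2*r^6 + 1524*p^4*q^4*r^4 + 1560*p^4*q^6*r^2 + 780*p^4*q^8 + 352*p^6*r^6 +
      1104*p^6*q^2*r^4 + 1200*p^6*q^4*r^2 + 800*p^6*q^6 + 288*p^8*r^4 + 288*p^8*q^2*r^2 +
      288*p^8*q^4 := by ring
  have h2 : (0:ℝ) ≤ 27*q^4*r^8 + 98*q^6*r^6 + 159*q^8*r^4 + 132*q^10*r^2 + 44*q^12 + 108*p^2*q^2*r^8 +
      480*p^2*q^4*r^6 + 840*p^2*q^6*r^4 + 780*p^2*q^8*r^2 + 312*p^2*q^10 + 108*p^4*r^8 +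
      744*p^4*q^2*r^6 + 1524*p^4*q^4*r^4 + 1560*p^4*q^6*r^2 + 780*p^4*q^8 + 352*p^6*r^6 +
      1104*p^6*q^2*r^4 + 1200*p^6*q^4*r^2 + 800*p^6*q^6 + 288*p^8*r^4 + 288*p^8*q^2*r^2 +
      288*p^8*q^4 := by positivity
  linarith

lemma ciSup_equiv {α β : Type*} [Nonempty α] [Nonempty β] (e : α ≃ β) (f : β → ℝ) :
    ⨆ x, f (e x) = ⨆ y, f y := by
  rw [iSup, iSup]; congr 1; exact e.surjective.range_comp f

lemma ciInf_equiv {α β : Type*} [Nonempty α] [Nonempty β] (e : α ≃ β) (f : β → ℝ) :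
    ⨅ x, f (e x) = ⨅ y, f y := by
  rw [iInf, iInf]; congr 1; exact e.surjective.range_comp f

lemma quadForm_conj (Q : Matrix (Fin 2) (Fin 2) ℝ) (U : Matrix (Fin 2) (Fin 2) ℝ)
    (y : Fin 2 → ℝ) : quadForm (Uᵀ * Q * U) y = quadForm Q (U *ᵥ y) := by
  unfold quadForm
  rw [← Matrix.mulVec_mulVec, ← Matrix.mulVec_mulVec, Matrix.dotProduct_mulVec,
    Matrix.vecMul_transpose]

def Umap (U : Matrix (Fin 2) (Fin 2) ℤ) : Matrix (Fin 2) (Fin 2) ℝ :=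
  U.map (Int.castRingHom ℝ)

lemma Umap_mul (A B : Matrix (Fin 2) (Fin 2) ℤ) : Umap (A * B) = Umap A * Umap B :=
  Matrix.map_mul

lemma Umap_one : Umap (1 : Matrix (Fin 2) (Fin 2) ℤ) = 1 := by
  unfold Umap
  exact Matrix.map_one _ (by simp) (by simp)

section conj
variable {U : Matrix (Fin 2) (Fin 2) ℤ}

lemma U_inv (hU : U.det = 1 ∨ U.det = -1) :
    U * (U.det • U.adjugate) = 1 ∧ (U.det • U.adjugate) * U = 1 := by
  constructor
  · rw [Matrix.mul_smul, Matrix.mul_adjugate, smul_smul]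
    rcases hU with h | h <;> simp [h]
  · rw [Matrix.smul_mul, Matrix.adjugate_mul, smul_smul]
    rcases hU with h | h <;> simp [h]

/-- equivalence of ℤ² induced by U -/
def eInt (hU : U.det = 1 ∨ U.det = -1) : (Fin 2 → ℤ) ≃ (Fin 2 → ℤ) where
  toFun v := U *ᵥ v
  invFun v := (U.det • U.adjugate) *ᵥ v
  left_inv v := by
    show (U.det • U.adjugate) *ᵥ (U *ᵥ v) = v
    rw [Matrix.mulVec_mulVec, (U_inv hU).2, Matrix.one_mulVec]
  right_inv v := by
    show U *ᵥ ((U.det • U.adjugate) *ᵥ v) = v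
    rw [Matrix.mulVec_mulVec, (U_inv hU).1, Matrix.one_mulVec]

/-- equivalence of ℝ² induced by U -/
def eReal (hU : U.det = 1 ∨ U.det = -1) : (Fin 2 → ℝ) ≃ (Fin 2 → ℝ) where
  toFun v := Umap U *ᵥ v
  invFun v := Umap (U.det • U.adjugate) *ᵥ v
  left_inv v := by
    show Umap (U.det • U.adjugate) *ᵥ (Umap U *ᵥ v) = v
    rw [Matrix.mulVec_mulVec, ← Umap_mul, (U_inv hU).2, Umap_one, Matrix.one_mulVec]
  right_inv v := by
    show Umap U *ᵥ (Umap (U.det • U.adjugate) *ᵥ v) = v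
    rw [Matrix.mulVec_mulVec, ← Umap_mul, (U_inv hU).1, Umap_one, Matrix.one_mulVec]

lemma intCast_mulVec (v : Fin 2 → ℤ) : intCast (U *ᵥ v) = Umap U *ᵥ intCast v := by
  funext i
  fin_cases i <;>
    simp [intCast, Umap, Matrix.mulVec, dotProduct, Fin.sum_univ_two]

variable (Q : Matrix (Fin 2) (Fin 2) ℝ)

lemma inhomMin_conj (hU : U.det = 1 ∨ U.det = -1) : inhomMin ((Umap U)ᵀ * Q * Umap U) = inhomMin Q := by
  unfold inhomMin
  have h1 : ∀ x : Fin 2 → ℝ,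
      (⨅ v : Fin 2 → ℤ, quadForm ((Umap U)ᵀ * Q * Umap U) (x - intCast v))
        = ⨅ v : Fin 2 → ℤ, quadForm Q (Umap U *ᵥ x - intCast v) := by
    intro x
    have h2 : ∀ v : Fin 2 → ℤ,
        quadForm ((Umap U)ᵀ * Q * Umap U) (x - intCast v)
          = quadForm Q (Umap U *ᵥ x - intCast (eInt hU v)) := by
      intro v
      rw [quadForm_conj, Matrix.mulVec_sub]
      congr 1
      rw [show (eInt hU v) = U *ᵥ v from rfl, intCast_mulVec]
    simp_rw [h2]
    exact ciInf_equiv (eInt hU) (fun v => quadForm Q (Umap U *ᵥ x - intCast v))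
  simp_rw [h1]
  exact ciSup_equiv (eReal hU) (fun z => ⨅ v : Fin 2 → ℤ, quadForm Q (z - intCast v))

lemma det_conj (hU : U.det = 1 ∨ U.det = -1) : ((Umap U)ᵀ * Q * Umap U).det = Q.det := by
  have hdet : (Umap U).det = (U.det : ℝ) := by
    rw [Matrix.det_fin_two, Matrix.det_fin_two]
    simp [Umap, Matrix.map_apply]
  rw [Matrix.det_mul, Matrix.det_mul, Matrix.det_transpose, hdet]
  rcases hU with h | h <;> rw [h] <;> push_cast <;> ring

lemma isPQF_conj (hU : U.det = 1 ∨ U.det = -1) (hQ : IsPQF Q) : IsPQF ((Umap U)ᵀ * Q * Umap U) := by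
  have hsymm : ((Umap U)ᵀ * Q * Umap U).IsSymm := by
    rw [Matrix.IsSymm, Matrix.transpose_mul, Matrix.transpose_mul, Matrix.transpose_transpose,
      hQ.1.eq, Matrix.mul_assoc]
  refine ⟨hsymm, Matrix.PosDef.of_dotProduct_mulVec_pos ?_ ?_⟩
  · rw [Matrix.IsHermitian, Matrix.conjTranspose_eq_transpose_of_trivial]
    exact hsymm
  · intro x hx
    have hx' : Umap U *ᵥ x ≠ 0 := by
      intro h
      apply hx
      have h2 := congrArg (eReal hU).symm (show eReal hU x = 0 from h)
      rwa [Equiv.symm_apply_apply, show (eReal hU).symm 0 = 0 by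
        show Umap (U.det • U.adjugate) *ᵥ 0 = 0
        simp [Matrix.mulVec_zero]] at h2
    have h := quadForm_pos hQ hx'
    rw [show star x = x from funext fun _ => rfl]
    show (0:ℝ) < quadForm ((Umap U)ᵀ * Q * Umap U) x
    rw [quadForm_conj]
    exact h
end conj

lemma vec2_ne_zero {v : Fin 2 → ℤ} (h : ¬(v 0 = 0 ∧ v 1 = 0)) : v ≠ 0 := by
  intro hv
  exact h ⟨by rw [hv]; rfl, by rw [hv]; rfl⟩

lemma vec2_eq_zero {v : Fin 2 → ℤ} (h0 : v 0 = 0) (h1 : v 1 = 0) : v = 0 := by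
  funext i; fin_cases i <;> assumption

lemma exists_min_vec {Q : Matrix (Fin 2) (Fin 2) ℝ} (hQ : IsPQF Q) :
    ∃ w : Fin 2 → ℤ, w ≠ 0 ∧
      ∀ v : Fin 2 → ℤ, v ≠ 0 → quadForm Q (intCast w) ≤ quadForm Q (intCast v) := by
  set a := Q 0 0 with ha
  have ha0 : 0 < a := (entry_pos hQ).1
  set m := Q.det / (Q 0 0 + Q 1 1) with hm
  have hm0 : 0 < m := div_pos (det_pos' hQ) (by have := (entry_pos hQ).2; linarith)
  set N : ℕ := ⌈(a+1)/m⌉₊ with hN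
  have hNle : (a+1)/m ≤ (N:ℝ) := Nat.le_ceil _
  have hmN : a + 1 ≤ m * N := by
    rw [div_le_iff₀ hm0] at hNle; linarith
  have hN1 : 1 ≤ N := by
    by_contra h
    push_neg at h
    interval_cases N
    · simp at hmN; nlinarith
  -- finite search space
  set S : Finset (ℤ × ℤ) :=
    (Finset.Icc (-(N:ℤ)) N ×ˢ Finset.Icc (-(N:ℤ)) N).filter (fun p => p ≠ (0,0)) with hS
  have h10 : ((1:ℤ),(0:ℤ)) ∈ S := by
    simp only [hS, Finset.mem_filter, Finset.mem_product, Finset.mem_Icc]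
    refine ⟨⟨⟨by omega, by exact_mod_cast hN1⟩, ⟨by omega, by positivity⟩⟩, by simp⟩
  obtain ⟨p, hpS, hpmin⟩ := S.exists_min_image
    (fun p => quadForm Q (intCast ![p.1, p.2])) ⟨_, h10⟩
  refine ⟨![p.1, p.2], ?_, ?_⟩
  · apply vec2_ne_zero
    rintro ⟨h0, h1⟩
    simp only [hS, Finset.mem_filter] at hpS
    exact hpS.2 (by simp at h0 h1; exact Prod.ext h0 h1)
  · intro v hv
    by_cases hin : |v 0| ≤ (N:ℤ) ∧ |v 1| ≤ (N:ℤ)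
    · have hvS : (v 0, v 1) ∈ S := by
        simp only [hS, Finset.mem_filter, Finset.mem_product, Finset.mem_Icc]
        have h1 := abs_le.mp hin.1
        have h2 := abs_le.mp hin.2
        refine ⟨⟨⟨h1.1, h1.2⟩, ⟨h2.1, h2.2⟩⟩, ?_⟩
        · intro h
          exact hv (vec2_eq_zero (by simpa using congrArg Prod.fst h)
            (by simpa using congrArg Prod.snd h))
      have := hpmin _ hvS
      simpa [show ![v 0, v 1] = v from funext fun i => by fin_cases i <;> rfl] using this
    · -- the quadratic form is large outside the box
      have hbig : a + 1 ≤ quadForm Q (intCast v) := by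
        have hl := quad_lower hQ (intCast v)
        simp only [intCast] at hl
        have hsq : (N:ℝ)^2 ≤ ((v 0 : ℝ))^2 + ((v 1 : ℝ))^2 := by
          push_neg at hin
          have hc : ∀ k : ℤ, (N:ℤ) < |k| → (N:ℝ)^2 ≤ ((k:ℝ))^2 := by
            intro k hk
            have : (N:ℝ) ≤ |(k:ℝ)| := by
              rw [show ((k:ℝ)) = ((k:ℤ):ℝ) from rfl, ← Int.cast_abs]
              exact_mod_cast hk.le
            nlinarith [abs_nonneg (k:ℝ), sq_abs (k:ℝ), sq_nonneg (|(k:ℝ)| - N)]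
          rcases lt_or_ge (N:ℤ) (|v 0|) with h | h
          · have := hc _ h
            nlinarith [sq_nonneg ((v 1 : ℝ))]
          · have := hc _ (hin h)
            nlinarith [sq_nonneg ((v 0 : ℝ))]
        have hNR : (1:ℝ) ≤ (N:ℝ) := by exact_mod_cast hN1
        nlinarith [hl, mul_le_mul_of_nonneg_left hsq hm0.le]
      have hsmall : quadForm Q (intCast ![p.1, p.2]) ≤ a := by
        have := hpmin _ h10
        calc quadForm Q (intCast ![p.1, p.2]) ≤ quadForm Q (intCast ![1, 0]) := this
        _ = a := by rw [quadForm_apply]; simp [intCast]; rfl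
      linarith

lemma intCast_ne_zero {v : Fin 2 → ℤ} (hv : v ≠ 0) : intCast v ≠ 0 := by
  intro h
  apply hv
  funext i
  have := congrFun h i
  simpa [intCast] using this

lemma quadForm_conj_int (Q : Matrix (Fin 2) (Fin 2) ℝ) (U : Matrix (Fin 2) (Fin 2) ℤ)
    (v : Fin 2 → ℤ) :
    quadForm ((Umap U)ᵀ * Q * Umap U) (intCast v) = quadForm Q (intCast (U *ᵥ v)) := by
  rw [quadForm_conj, intCast_mulVec]

lemma mulVec_ne_zero {U : Matrix (Fin 2) (Fin 2) ℤ} (hU : U.det = 1 ∨ U.det = -1)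
    {v : Fin 2 → ℤ} (hv : v ≠ 0) : U *ᵥ v ≠ 0 := by
  intro h
  apply hv
  have h3 : (U.det • U.adjugate) *ᵥ (U *ᵥ v) = (U.det • U.adjugate) *ᵥ (0 : Fin 2 → ℤ) := by
    rw [h]
  rwa [Matrix.mulVec_mulVec, (U_inv hU).2, Matrix.one_mulVec, Matrix.mulVec_zero] at h3

lemma quadForm_e0 (Q : Matrix (Fin 2) (Fin 2) ℝ) : quadForm Q (intCast ![1,0]) = Q 0 0 := by
  rw [quadForm_apply]; simp [intCast]

lemma quadForm_e1 (Q : Matrix (Fin 2) (Fin 2) ℝ) : quadForm Q (intCast ![0,1]) = Q 1 1 := by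
  rw [quadForm_apply]; simp [intCast]

lemma conj_entry (Q : Matrix (Fin 2) (Fin 2) ℝ) (U : Matrix (Fin 2) (Fin 2) ℤ) (i j : Fin 2) :
    ((Umap U)ᵀ * Q * Umap U) i j =
      (U 0 i : ℝ) * Q 0 0 * (U 0 j : ℝ) + (U 0 i : ℝ) * Q 0 1 * (U 1 j : ℝ)
      + (U 1 i : ℝ) * Q 1 0 * (U 0 j : ℝ) + (U 1 i : ℝ) * Q 1 1 * (U 1 j : ℝ) := by
  simp [Umap, Matrix.mul_apply, Fin.sum_univ_two, Matrix.map_apply]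
  ring

/-- Step 1: achieve minimality of the (0,0) entry -/
lemma exists_normalized {Q : Matrix (Fin 2) (Fin 2) ℝ} (hQ : IsPQF Q) :
    ∃ Q' : Matrix (Fin 2) (Fin 2) ℝ, IsPQF Q' ∧ inhomMin Q' = inhomMin Q ∧ Q'.det = Q.det ∧
      (∀ v : Fin 2 → ℤ, v ≠ 0 → Q' 0 0 ≤ quadForm Q' (intCast v)) := by
  obtain ⟨w, hw, hmin⟩ := exists_min_vec hQ
  -- gcd of w is 1
  set g : ℕ := Int.gcd (w 0) (w 1) with hg
  have hg0 : g ≠ 0 := by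
    intro h
    rw [hg, Int.gcd_eq_zero_iff] at h
    exact hw (vec2_eq_zero h.1 h.2)
  have hg1 : g = 1 := by
    by_contra hne
    obtain ⟨p', hp'⟩ : ((g:ℤ)) ∣ w 0 := by rw [hg]; exact Int.gcd_dvd_left _ _
    obtain ⟨q', hq'⟩ : ((g:ℤ)) ∣ w 1 := by rw [hg]; exact Int.gcd_dvd_right _ _
    have hw' : (![p', q'] : Fin 2 → ℤ) ≠ 0 := by
      intro h
      have h0 : p' = 0 := by have := congrFun h 0; simpa using this
      have h1 : q' = 0 := by have := congrFun h 1; simpa using this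
      rw [h0, mul_zero] at hp'
      rw [h1, mul_zero] at hq'
      exact hw (vec2_eq_zero hp' hq')
    have hscale : quadForm Q (intCast w) = (g:ℝ)^2 * quadForm Q (intCast ![p', q']) := by
      rw [quadForm_apply, quadForm_apply]
      simp only [intCast]
      rw [show w 0 = (g:ℤ) * p' from hp', show w 1 = (g:ℤ) * q' from hq']
      push_cast
      ring
    have hle := hmin _ hw'
    have hpos := quadForm_pos hQ (intCast_ne_zero hw')
    have hgge : (2:ℝ) ≤ (g:ℝ)^2 := by
      have : 2 ≤ g := by omega
      have h2 : (2:ℝ) ≤ (g:ℝ) := by exact_mod_cast this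
      nlinarith
    nlinarith
  -- Bezout
  have hbez : (1:ℤ) = w 0 * Int.gcdA (w 0) (w 1) + w 1 * Int.gcdB (w 0) (w 1) := by
    have h := Int.gcd_eq_gcd_ab (w 0) (w 1)
    rw [← hg, hg1] at h
    exact_mod_cast h
  set x := Int.gcdA (w 0) (w 1)
  set y := Int.gcdB (w 0) (w 1)
  set U : Matrix (Fin 2) (Fin 2) ℤ := !![w 0, -y; w 1, x] with hU
  have hdet : U.det = 1 := by
    rw [hU, Matrix.det_fin_two_of]
    linarith [hbez]
  have hU1 : U.det = 1 ∨ U.det = -1 := Or.inl hdet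
  refine ⟨(Umap U)ᵀ * Q * Umap U, isPQF_conj Q hU1 hQ, inhomMin_conj Q hU1, det_conj Q hU1, ?_⟩
  intro v hv
  have hUe : U *ᵥ ![1, 0] = w := by
    funext i
    fin_cases i <;> simp [hU, Matrix.mulVec, dotProduct, Fin.sum_univ_two]
  have h00 : ((Umap U)ᵀ * Q * Umap U) 0 0 = quadForm Q (intCast w) := by
    rw [← quadForm_e0 ((Umap U)ᵀ * Q * Umap U), quadForm_conj_int, hUe]
  rw [h00, quadForm_conj_int]
  exact hmin _ (mulVec_ne_zero hU1 hv)

/-- Step 2: full reduction -/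
lemma exists_reduced {Q : Matrix (Fin 2) (Fin 2) ℝ} (hQ : IsPQF Q) :
    ∃ R : Matrix (Fin 2) (Fin 2) ℝ, IsPQF R ∧ inhomMin R = inhomMin Q ∧ R.det = Q.det ∧
      0 ≤ R 0 1 ∧ 2 * R 0 1 ≤ R 0 0 ∧ R 0 0 ≤ R 1 1 := by
  obtain ⟨Q', hQ', hinh, hdet, hmin⟩ := exists_normalized hQ
  set a := Q' 0 0 with ha
  have ha0 : 0 < a := (entry_pos hQ').1
  set b := Q' 0 1 with hb
  set k : ℤ := round (b / a) with hk
  set U₂ : Matrix (Fin 2) (Fin 2) ℤ := !![1, -k; 0, 1] with hU2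
  have hdet2 : U₂.det = 1 ∨ U₂.det = -1 := by
    left; rw [hU2, Matrix.det_fin_two_of]; ring
  set Q₂ := (Umap U₂)ᵀ * Q' * Umap U₂ with hQ2def
  have hQ2 : IsPQF Q₂ := isPQF_conj Q' hdet2 hQ'
  have hmin2 : ∀ v : Fin 2 → ℤ, v ≠ 0 → Q₂ 0 0 ≤ quadForm Q₂ (intCast v) := by
    intro v hv
    have h00 : Q₂ 0 0 = a := by
      rw [hQ2def, conj_entry]
      simp [hU2]; rfl
    rw [h00, hQ2def, quadForm_conj_int]
    exact hmin _ (mulVec_ne_zero hdet2 hv)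
  have h200 : Q₂ 0 0 = a := by
    rw [hQ2def, conj_entry]; simp [hU2]; rfl
  have h201 : Q₂ 0 1 = b - (k:ℝ) * a := by
    rw [hQ2def, conj_entry]
    simp [hU2]
    ring
  have habs : |Q₂ 0 1| ≤ a / 2 := by
    rw [h201]
    have := abs_sub_round (b / a)
    have h2 : |b / a - (k:ℝ)| ≤ 1/2 := by rw [hk]; exact_mod_cast this
    have h4 : b - (k:ℝ)*a = (b/a - k) * a := by field_simp
    rw [h4, abs_mul, abs_of_pos ha0]
    nlinarith [h2]
  -- sign normalization
  by_cases hsign : 0 ≤ Q₂ 0 1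
  · refine ⟨Q₂, hQ2, by rw [hQ2def, inhomMin_conj Q' hdet2, hinh],
      by rw [hQ2def, det_conj Q' hdet2, hdet], hsign, ?_, ?_⟩
    · rw [h200]; cases' abs_le.mp habs with h1 h2; linarith
    · rw [show Q₂ 1 1 = quadForm Q₂ (intCast ![0,1]) from (quadForm_e1 _).symm]
      exact hmin2 ![0,1] (by
        intro h
        have := congrFun h 1
        simp at this)
  · set U₃ : Matrix (Fin 2) (Fin 2) ℤ := !![1, 0; 0, -1] with hU3
    have hdet3 : U₃.det = 1 ∨ U₃.det = -1 := by
      right; rw [hU3, Matrix.det_fin_two_of]; ring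
    set Q₃ := (Umap U₃)ᵀ * Q₂ * Umap U₃ with hQ3def
    have h301 : Q₃ 0 1 = -(Q₂ 0 1) := by
      rw [hQ3def, conj_entry]; simp [hU3]
    have h300 : Q₃ 0 0 = Q₂ 0 0 := by
      rw [hQ3def, conj_entry]; simp [hU3]
    have h311 : Q₃ 1 1 = Q₂ 1 1 := by
      rw [hQ3def, conj_entry]; simp [hU3]
    have hmin3 : ∀ v : Fin 2 → ℤ, v ≠ 0 → Q₃ 0 0 ≤ quadForm Q₃ (intCast v) := by
      intro v hv
      rw [h300, hQ3def, quadForm_conj_int]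
      exact hmin2 _ (mulVec_ne_zero hdet3 hv)
    refine ⟨Q₃, isPQF_conj Q₂ hdet3 hQ2,
      by rw [hQ3def, inhomMin_conj Q₂ hdet3, hQ2def, inhomMin_conj Q' hdet2, hinh],
      by rw [hQ3def, det_conj Q₂ hdet3, hQ2def, det_conj Q' hdet2, hdet],
      by rw [h301]; linarith [not_le.mp hsign], ?_, ?_⟩
    · rw [h301, h300, h200]
      cases' abs_le.mp habs with h1 h2; linarith
    · rw [h311, h300,
        show Q₂ 1 1 = quadForm Q₂ (intCast ![0,1]) from (quadForm_e1 _).symm]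
      exact hmin2 ![0,1] (by
        intro h
        have := congrFun h 1
        simp at this)

lemma int_fact (k : ℤ) : 0 ≤ (k:ℝ) * ((k:ℝ) - 1) := by
  rcases le_or_gt k 0 with h | h
  · have h1 : (k:ℝ) ≤ 0 := by exact_mod_cast h
    nlinarith
  · have h1 : (1:ℝ) ≤ (k:ℝ) := by exact_mod_cast h
    nlinarith

lemma quad_upper_aux (a u c s t : ℝ) (hs : |s| ≤ 1/2) (ht : |t| ≤ 1/2) :
    a*s^2 + u*(s*t) + c*t^2 ≤ (|a| + |u| + |c|)/4 := by
  have hsl := abs_le.mp hs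
  have htl := abs_le.mp ht
  have hq1 : s^2 ≤ 1/4 := by nlinarith [hsl.1, hsl.2]
  have hq2 : t^2 ≤ 1/4 := by nlinarith [htl.1, htl.2]
  have t1 : a * s^2 ≤ |a|/4 := by
    nlinarith [mul_nonneg (sub_nonneg.mpr (le_abs_self a)) (sq_nonneg s),
      mul_nonneg (abs_nonneg a) (by linarith : (0:ℝ) ≤ 1/4 - s^2)]
  have t3 : c * t^2 ≤ |c|/4 := by
    nlinarith [mul_nonneg (sub_nonneg.mpr (le_abs_self c)) (sq_nonneg t),
      mul_nonneg (abs_nonneg c) (by linarith : (0:ℝ) ≤ 1/4 - t^2)]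
  have hst : |s*t| ≤ 1/4 := by
    rw [abs_mul]
    nlinarith [abs_nonneg s, abs_nonneg t]
  have t2 : u * (s*t) ≤ |u|/4 := by
    calc u * (s*t) ≤ |u * (s*t)| := le_abs_self _
    _ = |u| * |s*t| := abs_mul _ _
    _ ≤ |u| * (1/4) := mul_le_mul_of_nonneg_left hst (abs_nonneg _)
    _ = |u|/4 := by ring
  linarith

lemma inhom_bddAbove {Q : Matrix (Fin 2) (Fin 2) ℝ} (hQ : IsPQF Q) :
    BddAbove (Set.range fun x : Fin 2 → ℝ =>
      ⨅ v : Fin 2 → ℤ, quadForm Q (x - intCast v)) := by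
  refine ⟨(|Q 0 0| + |Q 0 1 + Q 1 0| + |Q 1 1|)/4, ?_⟩
  rintro r ⟨x, rfl⟩
  have hbb : BddBelow (Set.range fun v : Fin 2 → ℤ => quadForm Q (x - intCast v)) :=
    ⟨0, by rintro r ⟨v, rfl⟩; exact quadForm_nonneg hQ _⟩
  refine ciInf_le_of_le hbb ![round (x 0), round (x 1)] ?_
  have hsv : (x - intCast ![round (x 0), round (x 1)]) 0 = x 0 - round (x 0) := by
    simp [intCast]
  have htv : (x - intCast ![round (x 0), round (x 1)]) 1 = x 1 - round (x 1) := by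
    simp [intCast]
  rw [quadForm_apply, hsv, htv]
  exact quad_upper_aux _ _ _ _ _ (abs_sub_round (x 0)) (abs_sub_round (x 1))

/-- The covering lower bound for reduced forms. -/
lemma inhom_lower {Q : Matrix (Fin 2) (Fin 2) ℝ} (hQ : IsPQF Q)
    (hb : 0 ≤ Q 0 1) (h2b : 2 * Q 0 1 ≤ Q 0 0) (hac : Q 0 0 ≤ Q 1 1) :
    Q 0 0 * Q 1 1 * (Q 0 0 + Q 1 1 - 2 * Q 0 1) / (4 * Q.det) ≤ inhomMin Q := by
  set a := Q 0 0 with ha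
  set b := Q 0 1 with hbdef
  set c := Q 1 1 with hc
  have ha0 : 0 < a := (entry_pos hQ).1
  have hc0 : 0 < c := (entry_pos hQ).2
  have hD0 : 0 < Q.det := det_pos' hQ
  have hDe : Q.det = a*c - b^2 := det_eq hQ
  set x₀ : Fin 2 → ℝ := ![c*(a-b)/(2*Q.det), a*(c-b)/(2*Q.det)] with hx₀
  have step : ∀ v : Fin 2 → ℤ,
      a*c*(a+c-2*b)/(4*Q.det) ≤ quadForm Q (x₀ - intCast v) := by
    intro v
    have h0 : (x₀ - intCast v) 0 = c*(a-b)/(2*Q.det) - (v 0 : ℝ) := by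
      simp [hx₀, intCast]
    have h1 : (x₀ - intCast v) 1 = a*(c-b)/(2*Q.det) - (v 1 : ℝ) := by
      simp [hx₀, intCast]
    rw [quadForm_apply, h0, h1, symm_entry hQ, ← ha, ← hbdef, ← hc]
    set mr := ((v 0 : ℝ)) with hmr
    set nr := ((v 1 : ℝ)) with hnr
    have key : a * (c*(a-b)/(2*Q.det) - mr)^2 + (b + b) * ((c*(a-b)/(2*Q.det) - mr) *
        (a*(c-b)/(2*Q.det) - nr)) + c * (a*(c-b)/(2*Q.det) - nr)^2
        - a*c*(a+c-2*b)/(4*Q.det)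
        = b*((mr+nr)*((mr+nr)-1)) + (a-b)*(mr*(mr-1)) + (c-b)*(nr*(nr-1)) := by
      rw [hDe]
      have hne : a*c - b^2 ≠ 0 := by rw [← hDe]; exact hD0.ne'
      field_simp
      ring
    have f1 := int_fact (v 0)
    have f2 := int_fact (v 1)
    have f3 := int_fact (v 0 + v 1)
    rw [← hmr] at f1
    rw [← hnr] at f2
    have f3' : 0 ≤ (mr + nr) * ((mr + nr) - 1) := by
      have : ((v 0 + v 1 : ℤ):ℝ) = mr + nr := by push_cast [hmr, hnr]; ring
      rwa [this] at f3
    nlinarith [mul_nonneg hb f3', mul_nonneg (by linarith : (0:ℝ) ≤ a - b) f1,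
      mul_nonneg (by linarith : (0:ℝ) ≤ c - b) f2]
  calc a*c*(a+c-2*b)/(4*Q.det) ≤ ⨅ v : Fin 2 → ℤ, quadForm Q (x₀ - intCast v) :=
        le_ciInf step
  _ ≤ inhomMin Q := le_ciSup (inhom_bddAbove hQ) x₀

/-- the hexagonal quadratic form -/
def qa (u v : ℝ) : ℝ := 2*u^2 - 2*(u*v) + 2*v^2

lemma QA_entries : QAstar 2 0 0 = 2 ∧ QAstar 2 0 1 = -1 ∧ QAstar 2 1 0 = -1 ∧
    QAstar 2 1 1 = 2 := by
  refine ⟨?_, ?_, ?_, ?_⟩ <;> simp [QAstar] <;> norm_num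

lemma QA_det : (QAstar 2).det = 3 := by
  rw [Matrix.det_fin_two]
  obtain ⟨h1, h2, h3, h4⟩ := QA_entries
  rw [h1, h2, h3, h4]; norm_num

lemma quadForm_QA (y : Fin 2 → ℝ) : quadForm (QAstar 2) y = qa (y 0) (y 1) := by
  rw [quadForm_apply]
  obtain ⟨h1, h2, h3, h4⟩ := QA_entries
  rw [h1, h2, h3, h4, qa]; ring

lemma qa_nonneg (u v : ℝ) : 0 ≤ qa u v := by
  rw [qa]; nlinarith [sq_nonneg (u - v), sq_nonneg u, sq_nonneg v]

-- region lemmas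
lemma regA {s t : ℝ} (h1 : 0 ≤ s) (h2 : 0 ≤ t) (h3 : s + t ≤ 1) (h4 : 2*s - t ≤ 1)
    (h5 : 2*t - s ≤ 1) : qa s t ≤ 2/3 := by
  rw [qa]
  nlinarith [mul_nonneg h1 h2, mul_nonneg (by linarith : (0:ℝ) ≤ 1 - s - t)
    (by linarith : (0:ℝ) ≤ 1 - 2*s + t), mul_nonneg (by linarith : (0:ℝ) ≤ 1 - s - t)
    (by linarith : (0:ℝ) ≤ 1 - 2*t + s), mul_nonneg (by linarith : (0:ℝ) ≤ 1 - 2*s + t)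
    (by linarith : (0:ℝ) ≤ 1 - 2*t + s), mul_nonneg h1 (by linarith : (0:ℝ) ≤ 1 - 2*s + t),
    mul_nonneg h2 (by linarith : (0:ℝ) ≤ 1 - 2*t + s)]

lemma regC {s t : ℝ} (h1 : s ≤ 1) (h2 : 0 ≤ t) (h3 : 1 ≤ 2*s - t) (h4 : 2*t ≤ s) :
    qa (s-1) t ≤ 2/3 := by
  rw [qa]
  nlinarith [mul_nonneg h2 (by linarith : (0:ℝ) ≤ 1 - s), mul_nonneg
    (by linarith : (0:ℝ) ≤ 2*s - t - 1) (by linarith : (0:ℝ) ≤ s - 2*t),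
    mul_nonneg (by linarith : (0:ℝ) ≤ 2*s - t - 1) (by linarith : (0:ℝ) ≤ 1 - s),
    mul_nonneg (by linarith : (0:ℝ) ≤ s - 2*t) (by linarith : (0:ℝ) ≤ 1 - s),
    mul_nonneg h2 (by linarith : (0:ℝ) ≤ s - 2*t),
    mul_nonneg h2 (by linarith : (0:ℝ) ≤ 2*s - t - 1)]

lemma qa_comm (u v : ℝ) : qa u v = qa v u := by rw [qa, qa]; ring

lemma qa_neg (u v : ℝ) : qa (-u) (-v) = qa u v := by rw [qa, qa]; ring

/-- covering step: some translate of any point of the unit square is short -/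
lemma qa_upper {s t : ℝ} (hs0 : 0 ≤ s) (hs1 : s < 1) (ht0 : 0 ≤ t) (ht1 : t < 1) :
    ∃ d1 d2 : ℤ, qa (s - d1) (t - d2) ≤ 2/3 ∧ (d1 = 0 ∨ d1 = 1) ∧ (d2 = 0 ∨ d2 = 1) := by
  rcases le_total (s + t) 1 with h | h
  · rcases le_total (2*s - t) 1 with h4 | h4
    · rcases le_total (2*t - s) 1 with h5 | h5
      · exact ⟨0, 0, by push_cast; simpa using regA hs0 ht0 h h4 h5, Or.inl rfl, Or.inl rfl⟩
      · -- 2t - s ≥ 1 : use (0,1)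
        refine ⟨0, 1, ?_, Or.inl rfl, Or.inr rfl⟩
        push_cast
        have := regC (s := t) (t := s) ht1.le hs0 (by linarith) (by linarith)
        rw [qa_comm] at this
        simpa using this
    · -- 2s - t ≥ 1 : use (1,0)
      refine ⟨1, 0, ?_, Or.inr rfl, Or.inl rfl⟩
      push_cast
      have := regC hs1.le ht0 (by linarith) (by linarith)
      simpa using this
  · rcases le_total s (2*t) with h4 | h4
    · rcases le_total t (2*s) with h5 | h5
      · -- use (1,1)
        refine ⟨1, 1, ?_, Or.inr rfl, Or.inr rfl⟩
        push_cast
        have := regA (s := 1 - s) (t := 1 - t) (by linarith) (by linarith) (by linarith)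
          (by linarith) (by linarith)
        rw [show (1:ℝ) - s = -(s - 1) by ring, show (1:ℝ) - t = -(t - 1) by ring,
          qa_neg] at this
        exact this
      · -- t ≥ 2s : use (0,1)
        refine ⟨0, 1, ?_, Or.inl rfl, Or.inr rfl⟩
        push_cast
        have := regC (s := t) (t := s) ht1.le hs0 (by linarith) (by linarith)
        rw [qa_comm] at this
        simpa using this
    · -- s ≥ 2t : use (1,0)
      refine ⟨1, 0, ?_, Or.inr rfl, Or.inl rfl⟩
      push_cast
      have := regC hs1.le ht0 (by linarith) (by linarith)
      simpa using this

lemma third_sq (k : ℤ) : 1/9 ≤ ((k:ℝ) - 1/3)^2 := by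
  rcases le_or_gt k 0 with h | h
  · have : (k:ℝ) ≤ 0 := by exact_mod_cast h
    nlinarith
  · have : (1:ℝ) ≤ (k:ℝ) := by exact_mod_cast h
    nlinarith

lemma third_sq' {k : ℤ} (hk : k ≠ 0) : 4/9 ≤ ((k:ℝ) - 1/3)^2 := by
  rcases le_or_gt k 0 with h | h
  · have h1 : k ≤ -1 := by omega
    have : (k:ℝ) ≤ -1 := by exact_mod_cast h1
    nlinarith
  · have : (1:ℝ) ≤ (k:ℝ) := by exact_mod_cast h
    nlinarith

lemma twothird_sq (k : ℤ) : 1/9 ≤ ((k:ℝ) - 2/3)^2 := by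
  rcases le_or_gt k 0 with h | h
  · have : (k:ℝ) ≤ 0 := by exact_mod_cast h
    nlinarith
  · have : (1:ℝ) ≤ (k:ℝ) := by exact_mod_cast h
    nlinarith

lemma twothird_sq' {k : ℤ} (hk : k ≠ 1) : 4/9 ≤ ((k:ℝ) - 2/3)^2 := by
  rcases le_or_gt k 0 with h | h
  · have : (k:ℝ) ≤ 0 := by exact_mod_cast h
    nlinarith
  · have h1 : 2 ≤ k := by omega
    have : (2:ℝ) ≤ (k:ℝ) := by exact_mod_cast h1
    nlinarith

lemma qa_deep (m n : ℤ) : 2/3 ≤ qa (1/3 - (m:ℝ)) (2/3 - (n:ℝ)) := by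
  have hid : qa (1/3 - (m:ℝ)) (2/3 - (n:ℝ)) =
      ((m:ℝ) - 1/3)^2 + ((n:ℝ) - 2/3)^2 + (((n:ℝ) - (m:ℝ)) - 1/3)^2 := by
    rw [qa]; ring
  have h3 : 1/9 ≤ (((n:ℝ) - (m:ℝ)) - 1/3)^2 := by
    have h := third_sq (n - m)
    have hc : (((n - m : ℤ)):ℝ) = (n:ℝ) - (m:ℝ) := by push_cast; ring
    rwa [hc] at h
  by_cases hm : m = 0
  · by_cases hn : n = 1
    · subst hm hn; norm_num [qa]
    · have h2 := twothird_sq' hn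
      have h1 := third_sq m
      rw [hid]; linarith
  · have h1 := third_sq' hm
    have h2 := twothird_sq n
    rw [hid]; linarith

lemma inhomMin_QA : inhomMin (QAstar 2) = 2/3 := by
  have hbb : ∀ x : Fin 2 → ℝ,
      BddBelow (Set.range fun v : Fin 2 → ℤ => quadForm (QAstar 2) (x - intCast v)) := by
    intro x
    refine ⟨0, ?_⟩
    rintro r ⟨v, rfl⟩
    show 0 ≤ quadForm (QAstar 2) (x - intCast v)
    rw [quadForm_QA]
    exact qa_nonneg _ _
  apply le_antisymm
  · apply ciSup_le
    intro x
    set m := ⌊x 0⌋ with hm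
    set n := ⌊x 1⌋ with hn
    have hs0 : 0 ≤ x 0 - m := by rw [hm]; linarith [Int.floor_le (x 0)]
    have hs1 : x 0 - m < 1 := by rw [hm]; linarith [Int.lt_floor_add_one (x 0)]
    have ht0 : 0 ≤ x 1 - n := by rw [hn]; linarith [Int.floor_le (x 1)]
    have ht1 : x 1 - n < 1 := by rw [hn]; linarith [Int.lt_floor_add_one (x 1)]
    obtain ⟨d1, d2, hle, _, _⟩ := qa_upper hs0 hs1 ht0 ht1
    refine ciInf_le_of_le (hbb x) ![m + d1, n + d2] ?_
    rw [quadForm_QA]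
    have e0 : (x - intCast ![m + d1, n + d2]) 0 = (x 0 - m) - d1 := by
      simp [intCast]; push_cast; ring
    have e1 : (x - intCast ![m + d1, n + d2]) 1 = (x 1 - n) - d2 := by
      simp [intCast]; push_cast; ring
    rw [e0, e1]
    exact hle
  · have hBdd : BddAbove (Set.range fun x : Fin 2 → ℝ =>
        ⨅ v : Fin 2 → ℤ, quadForm (QAstar 2) (x - intCast v)) := by
      refine ⟨3/2, ?_⟩
      rintro r ⟨x, rfl⟩
      refine ciInf_le_of_le (hbb x) ![round (x 0), round (x 1)] ?_
      rw [quadForm_QA]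
      have e0 : (x - intCast ![round (x 0), round (x 1)]) 0 = x 0 - round (x 0) := by
        simp [intCast]
      have e1 : (x - intCast ![round (x 0), round (x 1)]) 1 = x 1 - round (x 1) := by
        simp [intCast]
      rw [e0, e1, qa]
      have h1 := abs_le.mp (abs_sub_round (x 0))
      have h2 := abs_le.mp (abs_sub_round (x 1))
      nlinarith [h1.1, h1.2, h2.1, h2.2]
    have hstep : 2/3 ≤ ⨅ v : Fin 2 → ℤ, quadForm (QAstar 2) (![1/3, 2/3] - intCast v) := by
      apply le_ciInf
      intro v
      rw [quadForm_QA]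
      have e0 : ((![1/3, 2/3] : Fin 2 → ℝ) - intCast v) 0 = 1/3 - (v 0 : ℝ) := by
        simp [intCast]
      have e1 : ((![1/3, 2/3] : Fin 2 → ℝ) - intCast v) 1 = 2/3 - (v 1 : ℝ) := by
        simp [intCast]
      rw [e0, e1]
      exact qa_deep (v 0) (v 1)
    exact hstep.trans (le_ciSup hBdd ![1/3, 2/3])

lemma ballVol_two : ballVol 2 = Real.pi := by
  rw [ballVol, EuclideanSpace.volume_ball]
  rw [show ((Fintype.card (Fin 2) : ℝ) / 2 + 1) = 2 by simp; norm_num]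
  rw [Real.Gamma_two]
  simp [Real.sq_sqrt Real.pi_pos.le, ENNReal.toReal_ofReal Real.pi_pos.le]

lemma sqrt427 : Real.sqrt (4/27) = 2 / Real.sqrt 27 := by
  rw [Real.sqrt_div (by norm_num : (0:ℝ) ≤ 4) 27,
    show (4:ℝ) = 2^2 by norm_num, Real.sqrt_sq (by norm_num : (0:ℝ) ≤ 2)]


/-- Kershner's theorem: every binary PQF has covering density at least `2π/√27`,
attained by `Q_{A*_2}`. -/
theorem covering_optimal_dim2 :
    (∀ Q : Matrix (Fin 2) (Fin 2) ℝ, IsPQF Q →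
      2 * Real.pi / Real.sqrt 27 ≤ covDensity Q) ∧
    covDensity (QAstar 2) = 2 * Real.pi / Real.sqrt 27 := by
  have h27 : (0:ℝ) < Real.sqrt 27 := Real.sqrt_pos.mpr (by norm_num)
  constructor
  · intro Q hQ
    obtain ⟨R, hR, hinh, hdet, hb, h2b, hac⟩ := exists_reduced hQ
    rw [covDensity, ← hinh, ← hdet, ballVol_two]
    set a := R 0 0
    set b := R 0 1
    set c := R 1 1
    have ha0 : 0 < a := (entry_pos hR).1
    have hc0 : 0 < c := (entry_pos hR).2
    have hD0 : 0 < R.det := det_pos' hR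
    have hDe : R.det = a * c - b^2 := det_eq hR
    set A := a * c * (a + c - 2*b) with hA
    have hA0 : 0 < A := by
      apply mul_pos (mul_pos ha0 hc0)
      linarith
    have hK : A / (4 * R.det) ≤ inhomMin R := inhom_lower hR hb h2b hac
    have hK0 : 0 < A / (4 * R.det) := div_pos hA0 (by linarith)
    have hmu0 : 0 < inhomMin R := lt_of_lt_of_le hK0 hK
    -- main inequality: 4/27 ≤ μ²/D
    have hmain : 4/27 ≤ inhomMin R ^ 2 / R.det := by
      rw [le_div_iff₀ hD0]
      have hkey := keyPoly hb h2b hac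
      rw [← hDe] at hkey
      have hKsq : (A / (4 * R.det))^2 ≤ inhomMin R ^ 2 := by
        apply pow_le_pow_left₀ hK0.le hK
      have hexp : (A / (4 * R.det))^2 = A^2 / (16 * R.det^2) := by
        rw [div_pow]; ring_nf
      have h4 : 4/27 * R.det ≤ A^2 / (16 * R.det^2) := by
        rw [le_div_iff₀ (by positivity)]
        nlinarith [hkey]
      calc 4/27 * R.det ≤ A^2 / (16 * R.det^2) := h4
      _ = (A / (4 * R.det))^2 := hexp.symm
      _ ≤ inhomMin R ^ 2 := hKsq
    calc 2 * Real.pi / Real.sqrt 27 = (2 / Real.sqrt 27) * Real.pi := by ring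
    _ = Real.sqrt (4/27) * Real.pi := by rw [sqrt427]
    _ ≤ Real.sqrt (inhomMin R ^ 2 / R.det) * Real.pi := by
        apply mul_le_mul_of_nonneg_right (Real.sqrt_le_sqrt hmain) Real.pi_pos.le
  · rw [covDensity, inhomMin_QA, QA_det, ballVol_two]
    rw [show ((2:ℝ)/3)^2/3 = 4/27 by norm_num, sqrt427]
    ring
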